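/- If f ∈ ℝ[x,y]_d is a binary form and g ∈ ℝ[u,v]_r is a form of degree r that annihilates f (as a differential operator g(∂_x,∂_y)f = 0) and splits as a product of r pairwise non-proportional real linear forms, then the real rank of f is at most r. -/

import Mathlib

open MvPolynomial

/-- The partial derivative `∂_x` as a linear endomorphism of `ℝ[x,y]`. -/
noncomputable def pd0 : Module.End ℝ (MvPolynomial (Fin 2) ℝ) :=
  (pderiv (0 : Fin 2)).toLinearMap

/-- The partial derivative `∂_y` as a linear endomorphism of `ℝ[x,y]`. -/
noncomputable def pd1 : Module.End ℝ (MvPolynomial (Fin 2) ℝ) :=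
  (pderiv (1 : Fin 2)).toLinearMap

/-- The action of a dual form `g(u,v)` on a binary form `f(x,y)` by substituting
`u = ∂_x`, `v = ∂_y`. -/
noncomputable def diffOp (g f : MvPolynomial (Fin 2) ℝ) : MvPolynomial (Fin 2) ℝ :=
  (AddMonoidAlgebra.coeff g).sum fun m c => c • ((pd0 ^ m 0 * pd1 ^ m 1) f)

/-- The linear binary form `a·x + b·y`. -/
noncomputable def linForm (a b : ℝ) : MvPolynomial (Fin 2) ℝ := C a * X 0 + C b * X 1

/-- The real rank of a binary form of degree `d`: the least `r` admitting a
decomposition `f = ∑ cᵢ (aᵢ x + bᵢ y)^d`. -/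
noncomputable def realRank (d : ℕ) (f : MvPolynomial (Fin 2) ℝ) : ℕ :=
  sInf {r | ∃ c a b : Fin r → ℝ, f = ∑ i, C (c i) * linForm (a i) (b i) ^ d}

lemma pderiv_comm' (i j : Fin 2) (f : MvPolynomial (Fin 2) ℝ) :
    pderiv i (pderiv j f) = pderiv j (pderiv i f) := by
  rcases eq_or_ne i j with rfl | hij
  · rfl
  · conv_lhs => rw [f.as_sum]
    conv_rhs => rw [f.as_sum]
    rw [map_sum, map_sum, map_sum, map_sum]
    refine Finset.sum_congr rfl fun m _ => ?_
    rw [pderiv_monomial, pderiv_monomial, pderiv_monomial, pderiv_monomial]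
    have h1 : ((m - Finsupp.single j 1 : Fin 2 →₀ ℕ)) i = m i := by
      simp [Finsupp.tsub_apply, Finsupp.single_apply, hij.symm]
    have h2 : ((m - Finsupp.single i 1 : Fin 2 →₀ ℕ)) j = m j := by
      simp [Finsupp.tsub_apply, Finsupp.single_apply, hij]
    rw [h1, h2, tsub_right_comm]
    ring_nf

lemma X_mul_pderiv_monomial (i : Fin 2) (m : Fin 2 →₀ ℕ) (c : ℝ) :
    X i * pderiv i (monomial m c) = monomial m (c * m i) := by
  rw [pderiv_monomial, X, monomial_mul]
  rcases Nat.eq_zero_or_pos (m i) with h | h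
  · simp [h]
  · have hm : Finsupp.single i 1 + (m - Finsupp.single i 1) = m := by
      ext j
      rcases eq_or_ne j i with rfl | hj
      · rw [Finsupp.add_apply, Finsupp.tsub_apply, Finsupp.single_eq_same]
        omega
      · rw [Finsupp.add_apply, Finsupp.tsub_apply, Finsupp.single_eq_of_ne' hj.symm]
        omega
    rw [hm, one_mul]

lemma degree_sum_fin2 (m : Fin 2 →₀ ℕ) : m.degree = m 0 + m 1 := by
  rw [Finsupp.degree, ← Fin.sum_univ_two (f := fun i => m i)]
  exact Finset.sum_subset (Finset.subset_univ _) (by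
    intro x _ hx
    simpa using hx)

lemma euler2 {d : ℕ} {f : MvPolynomial (Fin 2) ℝ} (hf : f.IsHomogeneous d) :
    X 0 * pderiv 0 f + X 1 * pderiv 1 f = (d : ℝ) • f := by
  conv_lhs => rw [f.as_sum, map_sum (pderiv 0), map_sum (pderiv 1), Finset.mul_sum,
    Finset.mul_sum]
  conv_rhs => rw [f.as_sum, Finset.smul_sum]
  rw [← Finset.sum_add_distrib]
  refine Finset.sum_congr rfl fun m hm => ?_
  rw [X_mul_pderiv_monomial, X_mul_pderiv_monomial, ← map_add, smul_monomial]
  congr 1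
  have hdeg : m.degree = d := by
    rw [Finsupp.degree_eq_weight_one]
    exact hf (mem_support_iff.mp hm)
  rw [degree_sum_fin2] at hdeg
  rw [← hdeg]
  push_cast
  rw [smul_eq_mul]
  ring

lemma pderiv_homog {d : ℕ} {f : MvPolynomial (Fin 2) ℝ} (hf : f.IsHomogeneous (d + 1))
    (i : Fin 2) : (pderiv i f).IsHomogeneous d := by
  conv => enter [1]; rw [f.as_sum, map_sum]
  refine MvPolynomial.IsHomogeneous.sum _ _ _ fun m hm => ?_
  rw [pderiv_monomial]
  rcases Nat.eq_zero_or_pos (m i) with h | h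
  · simp [h]
    exact isHomogeneous_zero _ _ _
  · refine isHomogeneous_monomial _ ?_
    have hdeg : m.degree = d + 1 := by
      rw [Finsupp.degree_eq_weight_one]
      exact hf (mem_support_iff.mp hm)
    have hsplit : m = (m - Finsupp.single i 1) + Finsupp.single i 1 := by
      ext j
      rcases eq_or_ne j i with rfl | hj
      · rw [Finsupp.add_apply, Finsupp.tsub_apply, Finsupp.single_eq_same]
        omega
      · rw [Finsupp.add_apply, Finsupp.tsub_apply, Finsupp.single_eq_of_ne' hj.symm,
          add_zero, tsub_zero]
    have hadd : ((m - Finsupp.single i 1) + Finsupp.single i 1 : Fin 2 →₀ ℕ).degree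
        = (m - Finsupp.single i 1 : Fin 2 →₀ ℕ).degree
          + (Finsupp.single i 1 : Fin 2 →₀ ℕ).degree := by
      simp [Finsupp.degree_eq_weight_one]
    have hsing : (Finsupp.single i 1 : Fin 2 →₀ ℕ).degree = 1 := by
      exact Finsupp.degree_single i 1
    rw [hsplit, hadd, hsing] at hdeg
    omega

lemma eq_C_of_homog_zero {f : MvPolynomial (Fin 2) ℝ} (hf : f.IsHomogeneous 0) :
    f = C (coeff 0 f) := by
  ext m
  rcases eq_or_ne m 0 with rfl | hm
  · simp
  · rw [hf.coeff_eq_zero (by simpa [Finsupp.degree_eq_zero_iff] using hm)]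
    rw [coeff_C, if_neg (fun h => hm h.symm)]

lemma linForm_ne_zero {a b : ℝ} (hab : ¬(a = 0 ∧ b = 0)) : linForm a b ≠ 0 := by
  intro h
  have h0 : coeff (Finsupp.single 0 1) (linForm a b) = a := by
    simp [linForm, coeff_C_mul, coeff_X', Finsupp.single_eq_single_iff]
  have h1 : coeff (Finsupp.single 1 1) (linForm a b) = b := by
    simp [linForm, coeff_C_mul, coeff_X', Finsupp.single_eq_single_iff]
  rw [h] at h0 h1
  simp at h0 h1
  exact hab ⟨h0.symm, h1.symm⟩

lemma linForm_isHomogeneous (a b : ℝ) : (linForm a b).IsHomogeneous 1 :=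
  (isHomogeneous_C_mul_X a 0).add (isHomogeneous_C_mul_X b 1)

lemma pderiv0_linForm (a b : ℝ) : pderiv 0 (linForm a b) = C a := by
  simp [linForm]

lemma pderiv1_linForm (a b : ℝ) : pderiv 1 (linForm a b) = C b := by
  simp [linForm]

lemma kerD : ∀ (d : ℕ) (a b : ℝ), ¬(a = 0 ∧ b = 0) → ∀ f : MvPolynomial (Fin 2) ℝ,
    f.IsHomogeneous d → a • pderiv 0 f + b • pderiv 1 f = 0 →
    ∃ c : ℝ, f = C c * linForm b (-a) ^ d := by
  intro d
  induction d with
  | zero =>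
    intro a b _ f hf _
    exact ⟨coeff 0 f, by rw [pow_zero, mul_one]; exact eq_C_of_homog_zero hf⟩
  | succ n ih =>
    intro a b hab f hf heq
    have h0 : (pderiv 0 f).IsHomogeneous n := pderiv_homog hf 0
    have h1 : (pderiv 1 f).IsHomogeneous n := pderiv_homog hf 1
    have hc0 : a • pderiv 0 (pderiv 0 f) + b • pderiv 1 (pderiv 0 f) = 0 := by
      have := congrArg (pderiv (0 : Fin 2)) heq
      rw [map_add, Derivation.map_smul, Derivation.map_smul, map_zero] at this
      rwa [pderiv_comm' 0 1 f] at this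
    have hc1 : a • pderiv 0 (pderiv 1 f) + b • pderiv 1 (pderiv 1 f) = 0 := by
      have := congrArg (pderiv (1 : Fin 2)) heq
      rw [map_add, Derivation.map_smul, Derivation.map_smul, map_zero] at this
      rwa [pderiv_comm' 1 0 f] at this
    obtain ⟨c0, hf0⟩ := ih a b hab _ h0 hc0
    obtain ⟨c1, hf1⟩ := ih a b hab _ h1 hc1
    have hℓ : linForm b (-a) ^ n ≠ 0 :=
      pow_ne_zero _ (linForm_ne_zero (by rintro ⟨hb, ha⟩; exact hab ⟨by linarith, hb⟩))
    have hsum : a * c0 + b * c1 = 0 := by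
      rw [hf0, hf1, smul_eq_C_mul, smul_eq_C_mul, ← mul_assoc, ← mul_assoc, ← map_mul,
        ← map_mul, ← add_mul, ← map_add] at heq
      rcases mul_eq_zero.mp heq with h | h
      · exact (C_injective _ ℝ).eq_iff.mp (by simpa using h)
      · exact absurd h hℓ
    obtain ⟨s, hs0, hs1⟩ : ∃ s, c0 = s * b ∧ c1 = -(s * a) := by
      by_cases ha : a = 0
      · have hb : b ≠ 0 := fun hb => hab ⟨ha, hb⟩
        have : c1 = 0 := by
          have : b * c1 = 0 := by rw [ha] at hsum; linarith
          rcases mul_eq_zero.mp this with h | h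
          · exact absurd h hb
          · exact h
        exact ⟨c0 / b, by field_simp, by rw [this, ha]; ring⟩
      · refine ⟨-c1 / a, ?_, by field_simp⟩
        field_simp
        nlinarith [hsum]
    have he := euler2 hf
    rw [hf0, hf1, hs0, hs1] at he
    refine ⟨s / (n + 1), ?_⟩
    have key : X 0 * (C (s * b) * linForm b (-a) ^ n)
        + X (1 : Fin 2) * (C (-(s * a)) * linForm b (-a) ^ n)
        = C s * linForm b (-a) ^ (n + 1) := by
      rw [pow_succ]
      unfold linForm
      push_cast [map_mul, map_neg]
      ring
    rw [key] at he
    have hne : ((n : ℝ) + 1) ≠ 0 := by positivity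
    have : C ((n : ℝ) + 1) * f = C s * linForm b (-a) ^ (n + 1) := by
      rw [he, smul_eq_C_mul]
      norm_num
    have h2 : C ((n : ℝ) + 1) * (C (s / (n + 1)) * linForm b (-a) ^ (n + 1))
        = C ((n : ℝ) + 1) * f := by
      rw [this, ← mul_assoc, ← map_mul]
      congr 2
      field_simp
    exact (mul_left_cancel₀ (by rw [Ne, C_eq_zero]; exact hne) h2).symm


noncomputable def Dop (a b : ℝ) : Module.End ℝ (MvPolynomial (Fin 2) ℝ) :=
  a • pd0 + b • pd1

lemma Dop_apply (a b : ℝ) (f : MvPolynomial (Fin 2) ℝ) :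
    Dop a b f = a • pderiv 0 f + b • pderiv 1 f := rfl

lemma commute_pd : Commute pd0 pd1 :=
  LinearMap.ext fun f => pderiv_comm' 0 1 f

lemma diffOp_monomial (m : Fin 2 →₀ ℕ) (c : ℝ) (f : MvPolynomial (Fin 2) ℝ) :
    diffOp (monomial m c) f = c • ((pd0 ^ m 0 * pd1 ^ m 1) f) := by
  rw [diffOp, sum_monomial_eq]
  rw [zero_smul]

lemma diffOp_add (g₁ g₂ f : MvPolynomial (Fin 2) ℝ) :
    diffOp (g₁ + g₂) f = diffOp g₁ f + diffOp g₂ f := by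
  rw [diffOp, diffOp, diffOp]
  exact Finsupp.sum_add_index' (fun m => zero_smul _ _) (fun m c₁ c₂ => add_smul _ _ _)

lemma diffOp_one (f : MvPolynomial (Fin 2) ℝ) : diffOp 1 f = f := by
  have : (1 : MvPolynomial (Fin 2) ℝ) = monomial 0 1 := by
    rw [← single_eq_monomial]; rfl
  rw [this, diffOp_monomial]
  simp

lemma diffOp_C_mul (a : ℝ) (g f : MvPolynomial (Fin 2) ℝ) :
    diffOp (C a * g) f = a • diffOp g f := by
  induction g using MvPolynomial.induction_on' with
  | monomial m c =>
    rw [C_mul_monomial, diffOp_monomial, diffOp_monomial, smul_smul]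
  | add p q hp hq =>
    rw [mul_add, diffOp_add, diffOp_add, hp, hq, smul_add]

lemma diffOp_X0_mul (g f : MvPolynomial (Fin 2) ℝ) :
    diffOp (X 0 * g) f = diffOp g (pd0 f) := by
  induction g using MvPolynomial.induction_on' with
  | monomial m c =>
    rw [X, monomial_mul, one_mul, diffOp_monomial, diffOp_monomial]
    have e0 : (Finsupp.single (0 : Fin 2) 1 + m : Fin 2 →₀ ℕ) 0 = m 0 + 1 := by
      rw [Finsupp.add_apply, Finsupp.single_eq_same]; omega
    have e1 : (Finsupp.single (0 : Fin 2) 1 + m : Fin 2 →₀ ℕ) 1 = m 1 := by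
      rw [Finsupp.add_apply, Finsupp.single_eq_of_ne' (by decide)]; omega
    rw [e0, e1]
    have hop : pd0 ^ (m 0 + 1) * pd1 ^ m 1 = (pd0 ^ m 0 * pd1 ^ m 1) * pd0 := by
      rw [mul_assoc, ← (commute_pd.pow_right (m 1)).eq, ← mul_assoc, ← pow_succ]
    rw [hop, Module.End.mul_apply]
  | add p q hp hq =>
    rw [mul_add, diffOp_add, diffOp_add, hp, hq]

lemma diffOp_X1_mul (g f : MvPolynomial (Fin 2) ℝ) :
    diffOp (X 1 * g) f = diffOp g (pd1 f) := by
  induction g using MvPolynomial.induction_on' with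
  | monomial m c =>
    rw [X, monomial_mul, one_mul, diffOp_monomial, diffOp_monomial]
    have e0 : (Finsupp.single (1 : Fin 2) 1 + m : Fin 2 →₀ ℕ) 0 = m 0 := by
      rw [Finsupp.add_apply, Finsupp.single_eq_of_ne' (by decide)]; omega
    have e1 : (Finsupp.single (1 : Fin 2) 1 + m : Fin 2 →₀ ℕ) 1 = m 1 + 1 := by
      rw [Finsupp.add_apply, Finsupp.single_eq_same]; omega
    rw [e0, e1]
    have hop : pd0 ^ m 0 * pd1 ^ (m 1 + 1) = (pd0 ^ m 0 * pd1 ^ m 1) * pd1 := by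
      rw [mul_assoc, ← pow_succ]
    rw [hop, Module.End.mul_apply]
  | add p q hp hq =>
    rw [mul_add, diffOp_add, diffOp_add, hp, hq]

lemma diffOp_linForm_mul (a b : ℝ) (g f : MvPolynomial (Fin 2) ℝ) :
    diffOp (linForm a b * g) f = diffOp g (Dop a b f) := by
  rw [linForm, add_mul, diffOp_add, mul_assoc, mul_assoc, diffOp_C_mul, diffOp_C_mul,
    diffOp_X0_mul, diffOp_X1_mul]
  have hlin : ∀ p q : MvPolynomial (Fin 2) ℝ,
      diffOp g (p + q) = diffOp g p + diffOp g q := by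
    intro p q
    rw [diffOp, diffOp, diffOp, ← Finsupp.sum_add]
    refine Finsupp.sum_congr fun m _ => ?_
    rw [map_add, smul_add]
  have hsmul : ∀ (t : ℝ) (p : MvPolynomial (Fin 2) ℝ),
      diffOp g (t • p) = t • diffOp g p := by
    intro t p
    rw [diffOp, diffOp, Finsupp.smul_sum]
    refine Finsupp.sum_congr fun m _ => ?_
    rw [map_smul, smul_comm]
  rw [Dop_apply, hlin, hsmul, hsmul]
  rfl

lemma diffOp_linForm (a b : ℝ) (f : MvPolynomial (Fin 2) ℝ) :
    diffOp (linForm a b) f = Dop a b f := by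
  have := diffOp_linForm_mul a b 1 f
  rwa [mul_one, diffOp_one] at this

lemma Dop_linForm_pow (a0 b0 cc A B : ℝ) (n : ℕ) :
    Dop a0 b0 (C cc * linForm B (-A) ^ (n + 1))
      = C (((n : ℝ) + 1) * (a0 * B - b0 * A) * cc) * linForm B (-A) ^ n := by
  have hp0 : pderiv (0 : Fin 2) (C cc * linForm B (-A) ^ (n + 1))
      = C cc * (((n + 1 : ℕ) : MvPolynomial (Fin 2) ℝ) * linForm B (-A) ^ n * C B) := by
    rw [pderiv_C_mul, pderiv_pow, pderiv0_linForm, Nat.add_sub_cancel]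
  have hp1 : pderiv (1 : Fin 2) (C cc * linForm B (-A) ^ (n + 1))
      = C cc * (((n + 1 : ℕ) : MvPolynomial (Fin 2) ℝ) * linForm B (-A) ^ n * C (-A)) := by
    rw [pderiv_C_mul, pderiv_pow, pderiv1_linForm, Nat.add_sub_cancel]
  rw [Dop_apply, hp0, hp1, smul_eq_C_mul, smul_eq_C_mul,
    ← map_natCast (C : ℝ →+* MvPolynomial (Fin 2) ℝ) (n + 1)]
  simp only [map_mul, map_sub, map_add, map_neg, Nat.cast_add, Nat.cast_one, map_one]
  ring

lemma main_induction : ∀ (r : ℕ) (a b : Fin r → ℝ), (∀ i, ¬(a i = 0 ∧ b i = 0)) →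
    (∀ i j, i ≠ j → a i * b j ≠ a j * b i) → ∀ (d : ℕ) (f : MvPolynomial (Fin 2) ℝ),
    f.IsHomogeneous d → diffOp (∏ i, linForm (a i) (b i)) f = 0 →
    ∃ c : Fin r → ℝ, f = ∑ i, C (c i) * linForm (b i) (-(a i)) ^ d := by
  intro r
  induction r with
  | zero =>
    intro a b _ _ d f hf hann
    refine ⟨fun _ => 0, ?_⟩
    rw [Finset.univ_eq_empty, Finset.prod_empty, diffOp_one] at hann
    rw [Finset.univ_eq_empty, Finset.sum_empty]
    exact hann
  | succ r ih =>
    intro a b hnz hnp d f hf hann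
    cases d with
    | zero =>
      refine ⟨Fin.cons (coeff 0 f) 0, ?_⟩
      rw [Fin.sum_univ_succ]
      simp only [Fin.cons_zero, Fin.cons_succ, pow_zero, mul_one, Pi.zero_apply, map_zero,
        Finset.sum_const_zero, add_zero]
      exact eq_C_of_homog_zero hf
    | succ n =>
      have hann' : diffOp (∏ i : Fin r, linForm (a i.succ) (b i.succ))
          (Dop (a 0) (b 0) f) = 0 := by
        rw [← diffOp_linForm_mul, ← Fin.prod_univ_succ (fun i => linForm (a i) (b i))]
        exact hann
      have hDf : (Dop (a 0) (b 0) f).IsHomogeneous n := by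
        rw [Dop_apply, smul_eq_C_mul, smul_eq_C_mul]
        exact ((pderiv_homog hf 0).C_mul _).add ((pderiv_homog hf 1).C_mul _)
      obtain ⟨e, he⟩ := ih (fun i => a i.succ) (fun i => b i.succ)
        (fun i => hnz i.succ)
        (fun i j hij => hnp i.succ j.succ (by simpa [Fin.succ_inj] using hij))
        n _ hDf hann'
      set κ : Fin r → ℝ := fun i => ((n : ℝ) + 1) * (a 0 * b i.succ - b 0 * a i.succ) with hκ
      have hκne : ∀ i, κ i ≠ 0 := by
        intro i
        have h1 := hnp 0 i.succ (Fin.succ_ne_zero i).symm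
        have h2 : a 0 * b i.succ - b 0 * a i.succ ≠ 0 := fun h => h1 (by linarith)
        exact mul_ne_zero (by positivity) h2
      set h : MvPolynomial (Fin 2) ℝ :=
        ∑ i : Fin r, C (e i / κ i) * linForm (b i.succ) (-(a i.succ)) ^ (n + 1) with hh
      have hDh : Dop (a 0) (b 0) h = Dop (a 0) (b 0) f := by
        rw [hh, map_sum, he]
        refine Finset.sum_congr rfl fun i _ => ?_
        rw [Dop_linForm_pow]
        congr 2
        have hki := hκne i
        rw [hκ] at hki ⊢
        field_simp
        exact mul_div_cancel_left₀ _ (right_ne_zero_of_mul hki)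
      have hfh : (f - h).IsHomogeneous (n + 1) := by
        refine hf.sub (IsHomogeneous.sum _ _ _ fun i _ => ?_)
        have := ((linForm_isHomogeneous (b i.succ) (-(a i.succ))).pow (n + 1)).C_mul
          (e i / κ i)
        simpa using this
      have hker : a 0 • pderiv 0 (f - h) + b 0 • pderiv 1 (f - h) = 0 := by
        have hz : Dop (a 0) (b 0) (f - h) = 0 := by rw [map_sub, hDh, sub_self]
        rwa [Dop_apply] at hz
      obtain ⟨c0, hc0⟩ := kerD (n + 1) (a 0) (b 0) (hnz 0) _ hfh hker
      refine ⟨Fin.cons c0 (fun i => e i / κ i), ?_⟩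
      rw [Fin.sum_univ_succ]
      simp only [Fin.cons_zero, Fin.cons_succ]
      rw [← hc0, ← hh]
      ring

/-- One direction of the Apolarity Lemma: if a real-rooted form `g = ∏ (aᵢu + bᵢv)` of
degree `r`, with pairwise non-proportional nonzero real linear factors, annihilates
the degree-`d` form `f`, then the real rank of `f` is at most `r`. -/
theorem realRank_le_of_real_rooted_apolar (d r : ℕ) (f : MvPolynomial (Fin 2) ℝ)
    (hf : f.IsHomogeneous d) (a b : Fin r → ℝ) (hnz : ∀ i, (a i, b i) ≠ (0, 0))
    (hnp : ∀ i j, i ≠ j → a i * b j ≠ a j * b i)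
    (hann : diffOp (∏ i, linForm (a i) (b i)) f = 0) :
    realRank d f ≤ r := by
  obtain ⟨c, hc⟩ := main_induction r a b
    (fun i hi => hnz i (by rw [hi.1, hi.2])) hnp d f hf hann
  exact Nat.sInf_le ⟨c, fun i => b i, fun i => -(a i), hc⟩
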